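/- Suppose positive integers a₁ ≤ a₂ ≤ b₂ ≤ b₁ < h satisfy min{a₁,a₂,b₁,b₂} ∈ {1,2}, a₁ + b₁ = h - 1, a₂ + b₂ = h - 1, and the rational function χ(T) = ∏ᵢ (T^{h-aᵢ}-1)(T^{h-bᵢ}-1) / ((T^{aᵢ}-1)(T^{bᵢ}-1)) is a polynomial. Then (a₁,a₂,b₂,b₁;h) is one of: (2,3,4,5;8), (1,2,3,4;6), (2,2,3,3;6), (1,2,2,3;5), (1,1,2,2;4), (1,1,1,1;3). -/

import Mathlib

open Polynomial

private lemma key_dvd (n m₁ m₂ m₃ m₄ : ℕ) (hn : n ≠ 0)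
    (h : (X ^ n - 1 : Polynomial ℚ) ∣
      (X ^ m₁ - 1) * (X ^ m₂ - 1) * (X ^ m₃ - 1) * (X ^ m₄ - 1)) :
    n ∣ m₁ ∨ n ∣ m₂ ∨ n ∣ m₃ ∨ n ∣ m₄ := by
  have hζ := Complex.isPrimitiveRoot_exp n hn
  set ζ : ℂ := Complex.exp (2 * Real.pi * Complex.I / n) with hζdef
  have hmap := map_dvd (mapRingHom (algebraMap ℚ ℂ)) h
  obtain ⟨q, hq⟩ := hmap
  have heval := congrArg (Polynomial.eval ζ) hq
  simp only [coe_mapRingHom, Polynomial.map_mul, Polynomial.map_sub, Polynomial.map_pow,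
    Polynomial.map_X, Polynomial.map_one, eval_mul, eval_sub, eval_pow, eval_X, eval_one] at heval
  rw [hζ.pow_eq_one] at heval
  simp only [sub_self, zero_mul] at heval
  rcases mul_eq_zero.mp heval with h' | h4
  · rcases mul_eq_zero.mp h' with h'' | h3
    · rcases mul_eq_zero.mp h'' with h1 | h2
      · exact Or.inl ((hζ.pow_eq_one_iff_dvd m₁).mp (sub_eq_zero.mp h1))
      · exact Or.inr (Or.inl ((hζ.pow_eq_one_iff_dvd m₂).mp (sub_eq_zero.mp h2)))
    · exact Or.inr (Or.inr (Or.inl ((hζ.pow_eq_one_iff_dvd m₃).mp (sub_eq_zero.mp h3))))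
  · exact Or.inr (Or.inr (Or.inr ((hζ.pow_eq_one_iff_dvd m₄).mp (sub_eq_zero.mp h4))))

private lemma dvd_cases' {d x : ℕ} (h : d ∣ x) :
    x = 0 ∨ x = d ∨ x = 2 * d ∨ 3 * d ≤ x := by
  obtain ⟨k, hk⟩ := h
  match k with
  | 0 => omega
  | 1 => omega
  | 2 => omega
  | (k + 3) =>
    have : d * 3 ≤ d * (k + 3) := Nat.mul_le_mul_left d (by omega)
    omega

set_option maxHeartbeats 1000000 in
private lemma arith_red (a₁ a₂ b₂ b₁ h : ℕ)
    (ha₁ : 0 < a₁) (h12 : a₁ ≤ a₂) (h2b : a₂ ≤ b₂) (hbb : b₂ ≤ b₁) (hbh : b₁ < h)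
    (hmin : a₁ = 1 ∨ a₁ = 2)
    (hw1 : a₁ + b₁ = h - 1) (hw2 : a₂ + b₂ = h - 1)
    (key1 : b₁ ∣ (b₁ + 1) ∨ b₁ ∣ (a₁ + 1) ∨ b₁ ∣ (b₂ + 1) ∨ b₁ ∣ (a₂ + 1))
    (key2 : b₂ ∣ (b₁ + 1) ∨ b₂ ∣ (a₁ + 1) ∨ b₂ ∣ (b₂ + 1) ∨ b₂ ∣ (a₂ + 1)) :
    a₁ + 8 * a₂ + 64 * b₂ + 512 * b₁ + 4096 * h = 30938 ∨
    a₁ + 8 * a₂ + 64 * b₂ + 512 * b₁ + 4096 * h = 35610 ∨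
    a₁ + 8 * a₂ + 64 * b₂ + 512 * b₁ + 4096 * h = 26833 ∨
    a₁ + 8 * a₂ + 64 * b₂ + 512 * b₁ + 4096 * h = 26322 ∨
    a₁ + 8 * a₂ + 64 * b₂ + 512 * b₁ + 4096 * h = 22161 ∨
    a₁ + 8 * a₂ + 64 * b₂ + 512 * b₁ + 4096 * h = 17545 ∨
    a₁ + 8 * a₂ + 64 * b₂ + 512 * b₁ + 4096 * h = 12873 := by
  have C1 : b₁ = 1 ∨ b₁ = a₁ + 1 ∨ b₁ = b₂ + 1 ∨ b₁ = a₂ + 1 := by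
    rcases key1 with h1 | h1 | h1 | h1 <;> rcases dvd_cases' h1 with h' | h' | h' | h' <;> omega
  have C2 : b₂ = 1 ∨ b₁ + 1 = 2 * b₂ ∨ b₂ = a₁ + 1 ∨ b₂ = a₂ + 1 := by
    rcases key2 with h2 | h2 | h2 | h2 <;> rcases dvd_cases' h2 with h' | h' | h' | h' <;> omega
  clear key1 key2
  rcases C1 with c1 | c1 | c1 | c1 <;> rcases C2 with c2 | c2 | c2 | c2 <;> omega

set_option maxHeartbeats 1000000 in
private lemma decode (a b c d e x y z w v : ℕ)
    (ha : a < 8) (hb : b < 8) (hc : c < 8) (hd : d < 8)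
    (hx : x < 8) (hy : y < 8) (hz : z < 8) (hw : w < 8)
    (heq : a + 8 * b + 64 * c + 512 * d + 4096 * e = x + 8 * y + 64 * z + 512 * w + 4096 * v) :
    a = x ∧ b = y ∧ c = z ∧ d = w ∧ e = v := by
  have h1 : a = x := by omega
  have h2 : b = y := by omega
  have h3 : c = z := by omega
  have h4 : d = w := by omega
  exact ⟨h1, h2, h3, h4, by omega⟩

private lemma dvd_snd {R : Type*} [CommRing R] (A B C D : Polynomial R) :
    B ∣ A * B * C * D := ⟨A * C * D, by ring⟩

private lemma dvd_fourth {R : Type*} [CommRing R] (A B C D : Polynomial R) :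
    D ∣ A * B * C * D := ⟨A * B * C, by ring⟩

set_option maxHeartbeats 1000000 in
private lemma spurious_not_dvd :
    ¬ (((X ^ 2 - 1) * (X ^ 4 - 1) * (X ^ 3 - 1) * (X ^ 3 - 1) : Polynomial ℚ) ∣
      ((X ^ (4 + 1) - 1) * (X ^ (2 + 1) - 1) * (X ^ (3 + 1) - 1) * (X ^ (3 + 1) - 1))) := by
  intro hdvd
  have m2 : ((X : Polynomial ℤ) ^ 2 - 1).Monic := by
    simpa using monic_X_pow_sub_C (1 : ℤ) (n := 2) (by norm_num)
  have m3 : ((X : Polynomial ℤ) ^ 3 - 1).Monic := by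
    simpa using monic_X_pow_sub_C (1 : ℤ) (n := 3) (by norm_num)
  have m4 : ((X : Polynomial ℤ) ^ 4 - 1).Monic := by
    simpa using monic_X_pow_sub_C (1 : ℤ) (n := 4) (by norm_num)
  have m5 : ((X : Polynomial ℤ) ^ 5 - 1).Monic := by
    simpa using monic_X_pow_sub_C (1 : ℤ) (n := 5) (by norm_num)
  have hZ : ((X ^ 2 - 1) * (X ^ 4 - 1) * (X ^ 3 - 1) * (X ^ 3 - 1) : Polynomial ℤ) ∣
      ((X ^ (4 + 1) - 1) * (X ^ (2 + 1) - 1) * (X ^ (3 + 1) - 1) * (X ^ (3 + 1) - 1)) := by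
    have hmonp : ((X ^ 2 - 1) * (X ^ 4 - 1) * (X ^ 3 - 1) * (X ^ 3 - 1) : Polynomial ℤ).Monic :=
      ((m2.mul m4).mul m3).mul m3
    have hmonq : ((X ^ (4 + 1) - 1) * (X ^ (2 + 1) - 1) * (X ^ (3 + 1) - 1) * (X ^ (3 + 1) - 1) :
        Polynomial ℤ).Monic := ((m5.mul m3).mul m4).mul m4
    rw [IsPrimitive.Int.dvd_iff_map_cast_dvd_map_cast _ _ hmonp.isPrimitive]
    simpa only [Polynomial.map_mul, Polynomial.map_sub, Polynomial.map_pow,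
      Polynomial.map_X, Polynomial.map_one] using hdvd
  have heval := Polynomial.eval_dvd (x := (2 : ℤ)) hZ
  norm_num at heval

/-- Classification of regular weights for `n = 2` (Proposition 2.2). -/
theorem regular_weight_classification_n2 (a₁ a₂ b₂ b₁ h : ℕ)
    (ha₁ : 0 < a₁) (h12 : a₁ ≤ a₂) (h2b : a₂ ≤ b₂) (hbb : b₂ ≤ b₁) (hbh : b₁ < h)
    (hmin : a₁ = 1 ∨ a₁ = 2)
    (hw1 : a₁ + b₁ = h - 1) (hw2 : a₂ + b₂ = h - 1)
    (hdvd : (X ^ a₁ - 1) * (X ^ b₁ - 1) * (X ^ a₂ - 1) * (X ^ b₂ - 1) ∣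
      ((X ^ (h - a₁) - 1) * (X ^ (h - b₁) - 1) * (X ^ (h - a₂) - 1) * (X ^ (h - b₂) - 1) :
        Polynomial ℚ)) :
    (a₁, a₂, b₂, b₁, h) = (2, 3, 4, 5, 8) ∨
    (a₁, a₂, b₂, b₁, h) = (1, 2, 3, 4, 6) ∨
    (a₁, a₂, b₂, b₁, h) = (2, 2, 3, 3, 6) ∨
    (a₁, a₂, b₂, b₁, h) = (1, 2, 2, 3, 5) ∨
    (a₁, a₂, b₂, b₁, h) = (1, 1, 2, 2, 4) ∨
    (a₁, a₂, b₂, b₁, h) = (1, 1, 1, 1, 3) := by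
  have e1 : h - a₁ = b₁ + 1 := by omega
  have e2 : h - b₁ = a₁ + 1 := by omega
  have e3 : h - a₂ = b₂ + 1 := by omega
  have e4 : h - b₂ = a₂ + 1 := by omega
  rw [e1, e2, e3, e4] at hdvd
  have hb1 : b₁ ≠ 0 := by omega
  have hb2 : b₂ ≠ 0 := by omega
  have key1 := key_dvd b₁ (b₁ + 1) (a₁ + 1) (b₂ + 1) (a₂ + 1) hb1
    (dvd_trans (dvd_snd _ _ _ _) hdvd)
  have key2 := key_dvd b₂ (b₁ + 1) (a₁ + 1) (b₂ + 1) (a₂ + 1) hb2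
    (dvd_trans (dvd_fourth _ _ _ _) hdvd)
  have E := arith_red a₁ a₂ b₂ b₁ h ha₁ h12 h2b hbb hbh hmin hw1 hw2 key1 key2
  have hh8 : h ≤ 8 := by rcases E with e | e | e | e | e | e | e <;> omega
  have B1 : a₁ < 8 := by omega
  have B2 : a₂ < 8 := by omega
  have B3 : b₂ < 8 := by omega
  have B4 : b₁ < 8 := by omega
  rcases E with e | e | e | e | e | e | e
  · obtain ⟨rfl, rfl, rfl, rfl, rfl⟩ := decode a₁ a₂ b₂ b₁ h 2 3 3 4 7 B1 B2 B3 B4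
      (by norm_num) (by norm_num) (by norm_num) (by norm_num) (by omega)
    exact absurd hdvd spurious_not_dvd
  · obtain ⟨rfl, rfl, rfl, rfl, rfl⟩ := decode a₁ a₂ b₂ b₁ h 2 3 4 5 8 B1 B2 B3 B4
      (by norm_num) (by norm_num) (by norm_num) (by norm_num) (by omega)
    exact Or.inl rfl
  · obtain ⟨rfl, rfl, rfl, rfl, rfl⟩ := decode a₁ a₂ b₂ b₁ h 1 2 3 4 6 B1 B2 B3 B4
      (by norm_num) (by norm_num) (by norm_num) (by norm_num) (by omega)
    exact Or.inr (Or.inl rfl)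
  · obtain ⟨rfl, rfl, rfl, rfl, rfl⟩ := decode a₁ a₂ b₂ b₁ h 2 2 3 3 6 B1 B2 B3 B4
      (by norm_num) (by norm_num) (by norm_num) (by norm_num) (by omega)
    exact Or.inr (Or.inr (Or.inl rfl))
  · obtain ⟨rfl, rfl, rfl, rfl, rfl⟩ := decode a₁ a₂ b₂ b₁ h 1 2 2 3 5 B1 B2 B3 B4
      (by norm_num) (by norm_num) (by norm_num) (by norm_num) (by omega)
    exact Or.inr (Or.inr (Or.inr (Or.inl rfl)))
  · obtain ⟨rfl, rfl, rfl, rfl, rfl⟩ := decode a₁ a₂ b₂ b₁ h 1 1 2 2 4 B1 B2 B3 B4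
      (by norm_num) (by norm_num) (by norm_num) (by norm_num) (by omega)
    exact Or.inr (Or.inr (Or.inr (Or.inr (Or.inl rfl))))
  · obtain ⟨rfl, rfl, rfl, rfl, rfl⟩ := decode a₁ a₂ b₂ b₁ h 1 1 1 1 3 B1 B2 B3 B4
      (by norm_num) (by norm_num) (by norm_num) (by norm_num) (by omega)
    exact Or.inr (Or.inr (Or.inr (Or.inr (Or.inr rfl))))
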